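/- Let β be a skew indecomposable involution. Then limsup_{n→∞} |Av^I_n(β)|^{1/n} ≥ (limsup_{n→∞} |Av_n(β)|^{1/n})^{1/2}. In particular, the upper growth rate of the β-avoiding involutions is at least the square root of the Stanley–Wilf limit of the β-avoiding permutations. -/

import Mathlib

/-- `π` contains the pattern `σ`. -/
def Contains {n k : ℕ} (π : Equiv.Perm (Fin n)) (σ : Equiv.Perm (Fin k)) : Prop :=
  ∃ f : Fin k → Fin n, StrictMono f ∧ ∀ i j : Fin k, σ i < σ j ↔ π (f i) < π (f j)

def IsInvolution {n : ℕ} (π : Equiv.Perm (Fin n)) : Prop := π⁻¹ = π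

/-- direct sum of permutations -/
def directSum {m n : ℕ} (σ : Equiv.Perm (Fin m)) (τ : Equiv.Perm (Fin n)) :
    Equiv.Perm (Fin (m + n)) :=
  finSumFinEquiv.symm.trans ((Equiv.sumCongr σ τ).trans finSumFinEquiv)

/-- skew sum of permutations -/
def skewSum {m n : ℕ} (σ : Equiv.Perm (Fin m)) (τ : Equiv.Perm (Fin n)) :
    Equiv.Perm (Fin (m + n)) :=
  finSumFinEquiv.symm.trans ((Equiv.sumCongr σ τ).trans
    ((Equiv.sumComm (Fin m) (Fin n)).trans (finSumFinEquiv.trans (finCongr (Nat.add_comm n m)))))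

def SumDecomposable {n : ℕ} (π : Equiv.Perm (Fin n)) : Prop :=
  ∃ (a b : ℕ) (h : a + b = n), 0 < a ∧ 0 < b ∧
    ∃ (σ : Equiv.Perm (Fin a)) (τ : Equiv.Perm (Fin b)),
      π = (finCongr h).permCongr (directSum σ τ)

def SkewDecomposable {n : ℕ} (π : Equiv.Perm (Fin n)) : Prop :=
  ∃ (a b : ℕ) (h : a + b = n), 0 < a ∧ 0 < b ∧
    ∃ (σ : Equiv.Perm (Fin a)) (τ : Equiv.Perm (Fin b)),
      π = (finCongr h).permCongr (skewSum σ τ)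

/-- a set of contiguous indices/values -/
def SetContiguous {n : ℕ} (S : Set (Fin n)) : Prop :=
  ∀ ⦃i j k : Fin n⦄, i ∈ S → j ∈ S → i ≤ k → k ≤ j → k ∈ S

/-- an interval of the permutation `π` -/
def IsPermInterval {n : ℕ} (π : Equiv.Perm (Fin n)) (S : Set (Fin n)) : Prop :=
  SetContiguous S ∧ SetContiguous (π '' S)

/-- A permutation of length at least 2 is simple if all its intervals are trivial. -/
def IsSimple {n : ℕ} (π : Equiv.Perm (Fin n)) : Prop :=
  2 ≤ n ∧ ∀ S : Set (Fin n), IsPermInterval π S → S.ncard ≤ 1 ∨ S = Set.univ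

-- patterns (0-indexed one-line notation)
noncomputable def p123 : Equiv.Perm (Fin 3) := Equiv.ofBijective ![0, 1, 2] (by decide)
noncomputable def p132 : Equiv.Perm (Fin 3) := Equiv.ofBijective ![0, 2, 1] (by decide)
noncomputable def p213 : Equiv.Perm (Fin 3) := Equiv.ofBijective ![1, 0, 2] (by decide)
noncomputable def p1324 : Equiv.Perm (Fin 4) := Equiv.ofBijective ![0, 2, 1, 3] (by decide)
noncomputable def p1234 : Equiv.Perm (Fin 4) := Equiv.ofBijective ![0, 1, 2, 3] (by decide)
noncomputable def p1342 : Equiv.Perm (Fin 4) := Equiv.ofBijective ![0, 2, 3, 1] (by decide)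
noncomputable def p1423 : Equiv.Perm (Fin 4) := Equiv.ofBijective ![0, 3, 1, 2] (by decide)
noncomputable def p2341 : Equiv.Perm (Fin 4) := Equiv.ofBijective ![1, 2, 3, 0] (by decide)
noncomputable def p2413 : Equiv.Perm (Fin 4) := Equiv.ofBijective ![1, 3, 0, 2] (by decide)
noncomputable def p5274163 : Equiv.Perm (Fin 7) := Equiv.ofBijective ![4, 1, 6, 3, 0, 5, 2] (by decide)

-- the order-respecting equivalence between a lexicographic sigma of Fins and a Fin
noncomputable def finSigmaOrderEquiv {m : ℕ} (k : Fin m → ℕ) :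
    (Σₗ i : Fin m, Fin (k i)) ≃o Fin (∑ i, k i) :=
  (monoEquivOfFin (Σₗ i : Fin m, Fin (k i)) (by
    rw [Fintype.card_congr (ofLex : _ ≃ (Σ i : Fin m, Fin (k i)))]
    simp)).symm

/-- the inflation `σ[α 0, …, α (m-1)]` -/
noncomputable def inflation {m : ℕ} (σ : Equiv.Perm (Fin m)) (k : Fin m → ℕ)
    (α : ∀ i, Equiv.Perm (Fin (k i))) : Equiv.Perm (Fin (∑ i, k i)) :=
  ((finSigmaOrderEquiv k).toEquiv.symm.trans
    ((ofLex : (Σₗ i : Fin m, Fin (k i)) ≃ (Σ i : Fin m, Fin (k i))).trans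
      ((Equiv.sigmaCongr σ fun i =>
          (α i).trans (finCongr (congrArg k (σ.symm_apply_apply i).symm))).trans
        ((toLex : (Σ t : Fin m, Fin (k (σ.symm t))) ≃ (Σₗ t : Fin m, Fin (k (σ.symm t)))).trans
          ((finSigmaOrderEquiv fun t => k (σ.symm t)).toEquiv.trans
            (finCongr (Equiv.sum_comp σ.symm k)))))))

noncomputable def avICount {b : ℕ} (β : Equiv.Perm (Fin b)) (n : ℕ) : ℕ :=
  Nat.card {π : Equiv.Perm (Fin n) // IsInvolution π ∧ ¬ Contains π β}

noncomputable def avCount {b : ℕ} (β : Equiv.Perm (Fin b)) (n : ℕ) : ℕ :=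
  Nat.card {π : Equiv.Perm (Fin n) // ¬ Contains π β}

noncomputable def avICountSet (B : Set ((k : ℕ) × Equiv.Perm (Fin k))) (n : ℕ) : ℕ :=
  Nat.card {π : Equiv.Perm (Fin n) // IsInvolution π ∧ ∀ β ∈ B, ¬ Contains π β.2}


-- ========== auxiliary lemmas ==========

lemma skewSum_apply_val {m n : ℕ} (σ : Equiv.Perm (Fin m)) (τ : Equiv.Perm (Fin n))
    (x : Fin (m + n)) :
    ((skewSum σ τ) x : ℕ) =
      if h : (x : ℕ) < m then n + σ ⟨x, h⟩ else τ ⟨(x : ℕ) - m, by omega⟩ := by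
  by_cases h : (x : ℕ) < m
  · have hx : x = Fin.castAdd n ⟨(x:ℕ), h⟩ := by ext; simp
    conv_lhs => rw [hx]
    rw [skewSum]
    simp only [Equiv.trans_apply, finSumFinEquiv_symm_apply_castAdd, Equiv.sumCongr_apply,
      Sum.map_inl, Equiv.sumComm_apply, Sum.swap_inl, finSumFinEquiv_apply_right,
      finCongr_apply, Fin.coe_cast, Fin.coe_natAdd]
    simp [h]
  · have hx : x = Fin.natAdd m ⟨(x:ℕ) - m, by omega⟩ := by ext; simp; omega
    conv_lhs => rw [hx]
    rw [skewSum]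
    simp only [Equiv.trans_apply, finSumFinEquiv_symm_apply_natAdd, Equiv.sumCongr_apply,
      Sum.map_inr, Equiv.sumComm_apply, Sum.swap_inr, finSumFinEquiv_apply_left,
      finCongr_apply, Fin.coe_cast, Fin.coe_castAdd]
    simp [h]

lemma isInvolution_skewSum {n : ℕ} (π : Equiv.Perm (Fin n)) :
    IsInvolution (skewSum π π⁻¹) := by
  have hmul : skewSum π π⁻¹ * skewSum π π⁻¹ = 1 := by
    ext x
    simp only [Equiv.Perm.mul_apply, Equiv.Perm.one_apply]
    by_cases h : (x : ℕ) < n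
    · have h1 : (((skewSum π π⁻¹) x) : ℕ) = n + π ⟨(x:ℕ), h⟩ := by
        rw [skewSum_apply_val, dif_pos h]
      rw [skewSum_apply_val]
      simp only [h1, Nat.add_sub_cancel_left]
      rw [dif_neg (by omega)]
      have : (⟨((π ⟨(x:ℕ), h⟩ : Fin n) : ℕ), (π ⟨(x:ℕ), h⟩).isLt⟩ : Fin n) = π ⟨(x:ℕ), h⟩ :=
        rfl
      rw [this, Equiv.Perm.inv_def, Equiv.symm_apply_apply]
    · have h1 : (((skewSum π π⁻¹) x) : ℕ) = π⁻¹ ⟨(x:ℕ) - n, by omega⟩ := by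
        rw [skewSum_apply_val, dif_neg h]
      rw [skewSum_apply_val]
      simp only [h1]
      rw [dif_pos (Fin.isLt _)]
      have : (⟨((π⁻¹ ⟨(x:ℕ) - n, by omega⟩ : Fin n) : ℕ),
          (π⁻¹ ⟨(x:ℕ) - n, by omega⟩).isLt⟩ : Fin n) = π⁻¹ ⟨(x:ℕ) - n, by omega⟩ := rfl
      rw [this, Equiv.Perm.inv_def, Equiv.apply_symm_apply]
      simp only []
      omega
  unfold IsInvolution
  exact inv_eq_of_mul_eq_one_left hmul

lemma contains_inv {n k : ℕ} {π : Equiv.Perm (Fin n)} {β : Equiv.Perm (Fin k)}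
    (h : Contains π β) : Contains π⁻¹ β⁻¹ := by
  obtain ⟨f, hf, hp⟩ := h
  refine ⟨fun i => π (f (β⁻¹ i)), fun i j hij => ?_, fun i j => ?_⟩
  · rw [← hp]
    simpa using hij
  · simp only [Equiv.Perm.inv_def, Equiv.symm_apply_apply]
    exact (hf.lt_iff_lt).symm

lemma card_valLT (b c : ℕ) (h : c ≤ b) : Fintype.card {j : Fin b // (j : ℕ) < c} = c := by
  rw [Fintype.card_congr
    (⟨fun j => ⟨(j : Fin b), j.2⟩, fun i => ⟨⟨(i : ℕ), lt_of_lt_of_le i.isLt h⟩, i.isLt⟩,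
      fun j => by ext; rfl, fun i => by ext; rfl⟩ :
      {j : Fin b // (j : ℕ) < c} ≃ Fin c)]
  exact Fintype.card_fin c

lemma card_valGE (b a : ℕ) (h : a ≤ b) : Fintype.card {j : Fin b // a ≤ (j : ℕ)} = b - a := by
  rw [Fintype.card_congr
    (⟨fun j => ⟨(j : Fin b) - a, by have := (j:Fin b).isLt; have := j.2; omega⟩,
      fun i => ⟨⟨a + (i : ℕ), by have := i.isLt; omega⟩, by simp⟩,
      fun j => by ext; have := j.2; simp; omega, fun i => by ext; simp⟩ :
      {j : Fin b // a ≤ (j : ℕ)} ≃ Fin (b - a))]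
  exact Fintype.card_fin _

lemma skewDecomposable_of {b : ℕ} (β : Equiv.Perm (Fin b)) (a : ℕ) (ha : 0 < a) (hab : a < b)
    (h : ∀ i j : Fin b, (i : ℕ) < a → a ≤ (j : ℕ) → β j < β i) : SkewDecomposable β := by
  have hbig : ∀ i : Fin b, (i : ℕ) < a → b - a ≤ (β i : ℕ) := by
    intro i hi
    have hinj : Function.Injective
        (fun j : {j : Fin b // a ≤ (j : ℕ)} => (⟨β j.1, by
          have := h i j.1 hi j.2
          exact Fin.lt_iff_val_lt_val.mp this⟩ : {v : Fin b // (v : ℕ) < (β i : ℕ)})) := by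
      intro x y hxy
      have : β x.1 = β y.1 := congrArg Subtype.val hxy
      exact Subtype.ext (β.injective this)
    have := Fintype.card_le_of_injective _ hinj
    rwa [card_valGE b a hab.le, card_valLT b _ (β i).isLt.le] at this
  have hsmall : ∀ j : Fin b, a ≤ (j : ℕ) → (β j : ℕ) < b - a := by
    intro j hj
    have hinj : Function.Injective
        (fun i : {i : Fin b // (i : ℕ) < a} => (⟨β i.1, by
          have := h i.1 j i.2 hj
          have := Fin.lt_iff_val_lt_val.mp this
          have hv := (β j).isLt
          omega⟩ : {v : Fin b // (β j : ℕ) < (v : ℕ)})) := by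
      intro x y hxy
      have : β x.1 = β y.1 := congrArg Subtype.val hxy
      exact Subtype.ext (β.injective this)
    have hcard := Fintype.card_le_of_injective _ hinj
    rw [card_valLT b a hab.le] at hcard
    have hc2 : Fintype.card {v : Fin b // (β j : ℕ) < (v : ℕ)} = b - ((β j : ℕ) + 1) := by
      have : ∀ v : Fin b, ((β j : ℕ) < (v : ℕ)) ↔ ((β j : ℕ) + 1 ≤ (v : ℕ)) := by
        intro v; omega
      rw [Fintype.card_congr (Equiv.subtypeEquivRight this), card_valGE b _ (by
        have := (β j).isLt; omega)]
    rw [hc2] at hcard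
    have := (β j).isLt
    omega
  have hble : a ≤ b := hab.le
  set c := b - a with hc
  have hinj1 : Function.Injective (fun i : Fin a =>
      (⟨(β ⟨(i : ℕ), lt_of_lt_of_le i.isLt hble⟩ : Fin b) - c, by
      have h1 := (β ⟨(i : ℕ), lt_of_lt_of_le i.isLt hble⟩).isLt
      have h2 := hbig ⟨(i : ℕ), lt_of_lt_of_le i.isLt hble⟩ i.isLt
      omega⟩ : Fin a)) := by
    intro x y hxy
    have hx2 := hbig ⟨(x : ℕ), lt_of_lt_of_le x.isLt hble⟩ x.isLt
    have hy2 := hbig ⟨(y : ℕ), lt_of_lt_of_le y.isLt hble⟩ y.isLt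
    have hval := congrArg Fin.val hxy
    simp only at hval
    have : ((β ⟨(x : ℕ), lt_of_lt_of_le x.isLt hble⟩ : Fin b) : ℕ)
        = ((β ⟨(y : ℕ), lt_of_lt_of_le y.isLt hble⟩ : Fin b) : ℕ) := by omega
    have h3 := congrArg Fin.val (β.injective (Fin.ext this))
    exact Fin.ext (by simpa using h3)
  have hinj2 : Function.Injective (fun i : Fin c =>
      (⟨(β ⟨a + (i : ℕ), by have := i.isLt; omega⟩ : Fin b), by
      exact hsmall _ (by simp)⟩ : Fin c)) := by
    intro x y hxy
    have hval := congrArg Fin.val hxy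
    simp only at hval
    have h3 := congrArg Fin.val (β.injective (Fin.ext hval))
    simp only at h3
    exact Fin.ext (by omega)
  let β₁ : Equiv.Perm (Fin a) := Equiv.ofBijective _ (Finite.injective_iff_bijective.mp hinj1)
  let β₂ : Equiv.Perm (Fin c) := Equiv.ofBijective _ (Finite.injective_iff_bijective.mp hinj2)
  refine ⟨a, c, by omega, ha, by omega, β₁, β₂, ?_⟩
  ext x
  simp only [Equiv.permCongr_apply, finCongr_apply, finCongr_symm, Fin.coe_cast]
  rw [skewSum_apply_val]
  simp only [Fin.coe_cast]
  by_cases hx : (x : ℕ) < a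
  · rw [dif_pos hx]
    simp only [β₁, Equiv.ofBijective_apply]
    have hb := hbig x hx
    simp only [Fin.eta] at hb ⊢
    omega
  · rw [dif_neg hx]
    simp only [β₂, Equiv.ofBijective_apply]
    have harg : (⟨a + ((x : ℕ) - a), by have := x.isLt; omega⟩ : Fin b) = x :=
      Fin.ext (by simp; omega)
    rw [harg]

lemma contains_skewSum_cases {m n b : ℕ} {σ : Equiv.Perm (Fin m)} {τ : Equiv.Perm (Fin n)}
    {β : Equiv.Perm (Fin b)} (h : Contains (skewSum σ τ) β) :
    Contains σ β ∨ Contains τ β ∨ SkewDecomposable β := by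
  obtain ⟨f, hf, hp⟩ := h
  by_cases hall : ∀ i : Fin b, (f i : ℕ) < m
  · left
    refine ⟨fun i => ⟨(f i : ℕ), hall i⟩, fun i j hij => ?_, fun i j => ?_⟩
    · exact Fin.mk_lt_mk.mpr (hf hij)
    · rw [hp i j, Fin.lt_iff_val_lt_val, Fin.lt_iff_val_lt_val,
        skewSum_apply_val, skewSum_apply_val, dif_pos (hall i), dif_pos (hall j)]
      simp only [Fin.eta]
      omega
  · push_neg at hall
    by_cases hnone : ∀ i : Fin b, ¬ (f i : ℕ) < m
    · right; left
      refine ⟨fun i => ⟨(f i : ℕ) - m, by have := (f i).isLt; have := hnone i; omega⟩,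
        fun i j hij => ?_, fun i j => ?_⟩
      · have := hf hij
        have h1 := hnone i; have h2 := hnone j
        exact Fin.mk_lt_mk.mpr (by
          have := Fin.lt_iff_val_lt_val.mp this; omega)
      · rw [hp i j, Fin.lt_iff_val_lt_val, Fin.lt_iff_val_lt_val,
          skewSum_apply_val, skewSum_apply_val, dif_neg (hnone i), dif_neg (hnone j)]
    · right; right
      push_neg at hnone
      obtain ⟨i₀, hi₀⟩ := hnone
      obtain ⟨j₀, hj₀⟩ := hall
      have hex : ∃ t : ℕ, ∃ ht : t < b, ¬ ((f ⟨t, ht⟩ : ℕ) < m) := ⟨(j₀ : ℕ), j₀.isLt, by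
        simpa [Fin.eta] using hj₀⟩
      classical
      let a := Nat.find hex
      obtain ⟨hab, hfa⟩ : ∃ ht : a < b, ¬ ((f ⟨a, ht⟩ : ℕ) < m) := Nat.find_spec hex
      have hgood : ∀ i : Fin b, (i : ℕ) < a → (f i : ℕ) < m := by
        intro i hi
        by_contra hcon
        exact Nat.find_min hex hi ⟨i.isLt, by simpa [Fin.eta] using hcon⟩
      have hbad : ∀ j : Fin b, a ≤ (j : ℕ) → ¬ (f j : ℕ) < m := by
        intro j hj hcon
        by_cases he : (j : ℕ) = a
        · exact hfa (by
            have : (⟨a, hab⟩ : Fin b) = j := Fin.ext he.symm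
            rwa [this])
        · have hlt : (⟨a, hab⟩ : Fin b) < j := Fin.mk_lt_mk.mpr (by omega)
          have := hf hlt
          have := Fin.lt_iff_val_lt_val.mp this
          exact hfa (by omega)
      have hapos : 0 < a := by
        rcases Nat.eq_zero_or_pos a with h0 | hpos
        · exfalso
          exact hbad i₀ (by omega) hi₀
        · exact hpos
      refine skewDecomposable_of β a hapos hab ?_
      intro i j hi hj
      rw [hp j i, Fin.lt_iff_val_lt_val, skewSum_apply_val, skewSum_apply_val,
        dif_pos (hgood i hi), dif_neg (hbad j hj)]
      have := (τ ⟨(f j : ℕ) - m, by have := (f j).isLt; omega⟩).isLt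
      omega

lemma contains_permCongr_iff {m n b : ℕ} (h : m = n) (ρ : Equiv.Perm (Fin m))
    (β : Equiv.Perm (Fin b)) :
    Contains ((finCongr h).permCongr ρ) β ↔ Contains ρ β := by
  constructor
  · rintro ⟨f, hf, hp⟩
    refine ⟨fun i => (finCongr h).symm (f i), fun i j hij => ?_, fun i j => ?_⟩
    · have := hf hij
      simp only [Fin.lt_def, finCongr_symm, finCongr_apply, Fin.coe_cast] at this ⊢
      exact this
    · rw [hp i j]
      simp only [Equiv.permCongr_apply, Fin.lt_def, finCongr_symm, finCongr_apply,
        Fin.coe_cast]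
  · rintro ⟨f, hf, hp⟩
    refine ⟨fun i => (finCongr h) (f i), fun i j hij => ?_, fun i j => ?_⟩
    · have := hf hij
      simp only [Fin.lt_def, finCongr_apply, Fin.coe_cast] at this ⊢
      exact this
    · rw [hp i j]
      simp only [Equiv.permCongr_apply, Fin.lt_def, finCongr_symm, finCongr_apply,
        Fin.coe_cast, Fin.cast_cast, Fin.cast_eq_self]

lemma isInvolution_permCongr {m n : ℕ} (h : m = n) (ρ : Equiv.Perm (Fin m))
    (hρ : IsInvolution ρ) : IsInvolution ((finCongr h).permCongr ρ) := by
  unfold IsInvolution at *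
  have : ((finCongr h).permCongr ρ)⁻¹ = (finCongr h).permCongr ρ⁻¹ := by
    ext y
    simp [Equiv.permCongr_apply, Equiv.Perm.inv_def]
    rfl
  rw [this, hρ]

lemma avCount_le_avICount {b : ℕ} (β : Equiv.Perm (Fin b)) (hβ : IsInvolution β)
    (hskew : ¬ SkewDecomposable β) (n : ℕ) : avCount β n ≤ avICount β (2 * n) := by
  have h2 : n + n = 2 * n := by ring
  have hinvp : ∀ π : Equiv.Perm (Fin n),
      IsInvolution ((finCongr h2).permCongr (skewSum π π⁻¹)) :=
    fun π => isInvolution_permCongr h2 _ (isInvolution_skewSum π)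
  have havoid : ∀ π : Equiv.Perm (Fin n), ¬ Contains π β →
      ¬ Contains ((finCongr h2).permCongr (skewSum π π⁻¹)) β := by
    intro π hπ hcon
    rw [contains_permCongr_iff] at hcon
    rcases contains_skewSum_cases hcon with h | h | h
    · exact hπ h
    · have := contains_inv h
      rw [inv_inv, hβ] at this
      exact hπ this
    · exact hskew h
  refine Nat.card_le_card_of_injective
    (fun π : {π : Equiv.Perm (Fin n) // ¬ Contains π β} =>
      (⟨(finCongr h2).permCongr (skewSum π.1 π.1⁻¹), hinvp π.1, havoid π.1 π.2⟩ :
        {ρ : Equiv.Perm (Fin (2 * n)) // IsInvolution ρ ∧ ¬ Contains ρ β}))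
    (fun x y hxy => ?_)
  have h1 : (finCongr h2).permCongr (skewSum x.1 x.1⁻¹)
      = (finCongr h2).permCongr (skewSum y.1 y.1⁻¹) := by
    simpa using congrArg Subtype.val hxy
  have h3 : skewSum x.1 x.1⁻¹ = skewSum y.1 y.1⁻¹ :=
    (Equiv.permCongr (finCongr h2)).injective h1
  apply Subtype.ext
  ext i
  have h4 := congrArg
    (fun ρ : Equiv.Perm (Fin (n + n)) =>
      ((ρ (⟨(i : ℕ), by have := i.isLt; omega⟩ : Fin (n + n))) : ℕ)) h3
  rw [skewSum_apply_val, skewSum_apply_val, dif_pos i.isLt, dif_pos i.isLt] at h4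
  simp only [Fin.eta] at h4
  omega

lemma avICount_le_avCount {b : ℕ} (β : Equiv.Perm (Fin b)) (n : ℕ) :
    avICount β n ≤ avCount β n := by
  exact Nat.card_le_card_of_injective
    (fun π => ⟨π.1, π.2.2⟩ : {π : Equiv.Perm (Fin n) // IsInvolution π ∧ ¬ Contains π β} →
      {π : Equiv.Perm (Fin n) // ¬ Contains π β})
    (fun x y hxy => Subtype.ext (by simpa using congrArg Subtype.val hxy))

lemma limsup_nonneg_of_nonneg {u : ℕ → ℝ} (hu : ∀ n, 0 ≤ u n) :
    0 ≤ Filter.limsup u Filter.atTop := by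
  by_cases hb : Filter.IsBoundedUnder (· ≤ ·) Filter.atTop u
  · exact Filter.le_limsup_of_frequently_le (Filter.Frequently.of_forall hu) hb
  · have : {a : ℝ | ∀ᶠ n in Filter.atTop, u n ≤ a} = ∅ := by
      ext a
      simp only [Set.mem_setOf_eq, Set.mem_empty_iff_false, iff_false]
      intro hcon
      exact hb ⟨a, hcon⟩
    rw [Filter.limsup_eq, this, Real.sInf_empty]

lemma limsup_unbounded_eq_zero {u : ℕ → ℝ}
    (hb : ¬ Filter.IsBoundedUnder (· ≤ ·) Filter.atTop u) :
    Filter.limsup u Filter.atTop = 0 := by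
  have : {a : ℝ | ∀ᶠ n in Filter.atTop, u n ≤ a} = ∅ := by
    ext a
    simp only [Set.mem_setOf_eq, Set.mem_empty_iff_false, iff_false]
    intro hcon
    exact hb ⟨a, hcon⟩
  rw [Filter.limsup_eq, this, Real.sInf_empty]

lemma analytic_step {u v : ℕ → ℝ} (hu0 : ∀ n, 0 ≤ u n) (hv0 : ∀ n, 0 ≤ v n)
    (hvu : ∀ n, v n ≤ u n) (hkey : ∀ n, Real.sqrt (u n) ≤ v (2 * n)) :
    Real.sqrt (Filter.limsup u Filter.atTop) ≤ Filter.limsup v Filter.atTop := by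
  by_cases hb : Filter.IsBoundedUnder (· ≤ ·) Filter.atTop u
  · obtain ⟨C, hC⟩ := hb
    have hbv : Filter.IsBoundedUnder (· ≤ ·) Filter.atTop v := by
      refine ⟨C, ?_⟩
      simp only [Filter.eventually_map] at hC ⊢
      filter_upwards [hC] with n hn
      exact le_trans (hvu n) hn
    set M := Filter.limsup v Filter.atTop with hM
    have hM0 : 0 ≤ M := limsup_nonneg_of_nonneg hv0
    have key : ∀ ε : ℝ, 0 < ε → Real.sqrt (Filter.limsup u Filter.atTop) ≤ M + ε := by
      intro ε hε
      have hev : ∀ᶠ m in Filter.atTop, v m < M + ε :=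
        Filter.eventually_lt_of_limsup_lt (by linarith) hbv
      have hev2 : ∀ᶠ n in Filter.atTop, u n ≤ (M + ε) ^ 2 := by
        have ht : Filter.Tendsto (fun n : ℕ => 2 * n) Filter.atTop Filter.atTop :=
          Filter.tendsto_atTop_mono (fun n => by change n ≤ 2 * n; omega) Filter.tendsto_id
        filter_upwards [ht.eventually hev] with n hn
        have h1 : Real.sqrt (u n) ≤ M + ε := le_trans (hkey n) hn.le
        have h2 : u n = Real.sqrt (u n) ^ 2 := (Real.sq_sqrt (hu0 n)).symm
        rw [h2]
        exact pow_le_pow_left₀ (Real.sqrt_nonneg _) h1 2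
      have hL : Filter.limsup u Filter.atTop ≤ (M + ε) ^ 2 :=
        Filter.limsup_le_of_le (Filter.isCoboundedUnder_le_of_le _ hu0) hev2
      calc Real.sqrt (Filter.limsup u Filter.atTop) ≤ Real.sqrt ((M + ε) ^ 2) :=
            Real.sqrt_le_sqrt hL
        _ = |M + ε| := Real.sqrt_sq_eq_abs _
        _ = M + ε := abs_of_nonneg (by linarith)
    exact le_of_forall_pos_le_add key
  · rw [limsup_unbounded_eq_zero hb, Real.sqrt_zero]
    exact limsup_nonneg_of_nonneg hv0

/-- For a skew indecomposable involution `β`, the upper growth rate of `β`-avoiding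
involutions is at least the square root of the upper growth rate of `β`-avoiding
permutations. -/
theorem avI_upper_growth_ge_sqrt {b : ℕ} (β : Equiv.Perm (Fin b))
    (hβ : IsInvolution β) (hskew : ¬ SkewDecomposable β) :
    Real.sqrt (Filter.limsup (fun n : ℕ => (avCount β n : ℝ) ^ ((n : ℝ)⁻¹)) Filter.atTop) ≤
      Filter.limsup (fun n : ℕ => (avICount β n : ℝ) ^ ((n : ℝ)⁻¹)) Filter.atTop := by
  have hu0 : ∀ n : ℕ, (0:ℝ) ≤ (avCount β n : ℝ) ^ ((n : ℝ)⁻¹) :=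
    fun n => Real.rpow_nonneg (Nat.cast_nonneg _) _
  have hv0 : ∀ n : ℕ, (0:ℝ) ≤ (avICount β n : ℝ) ^ ((n : ℝ)⁻¹) :=
    fun n => Real.rpow_nonneg (Nat.cast_nonneg _) _
  have hvu : ∀ n : ℕ, (avICount β n : ℝ) ^ ((n : ℝ)⁻¹) ≤ (avCount β n : ℝ) ^ ((n : ℝ)⁻¹) :=
    fun n => Real.rpow_le_rpow (Nat.cast_nonneg _)
      (Nat.cast_le.mpr (avICount_le_avCount β n)) (by positivity)
  have hkey : ∀ n : ℕ, Real.sqrt ((avCount β n : ℝ) ^ ((n : ℝ)⁻¹))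
      ≤ (avICount β (2 * n) : ℝ) ^ (((2 * n : ℕ) : ℝ)⁻¹) := by
    intro n
    rcases Nat.eq_zero_or_pos n with h0 | hn
    · subst h0
      simp
    · have hcast : ((2 * n : ℕ) : ℝ)⁻¹ = (n : ℝ)⁻¹ * (1 / 2) := by
        have hn' : (n : ℝ) ≠ 0 := Nat.cast_ne_zero.mpr hn.ne'
        push_cast
        field_simp
      have hle : (avCount β n : ℝ) ≤ (avICount β (2 * n) : ℝ) :=
        Nat.cast_le.mpr (avCount_le_avICount β hβ hskew n)
      calc Real.sqrt ((avCount β n : ℝ) ^ ((n : ℝ)⁻¹))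
          = ((avCount β n : ℝ) ^ ((n : ℝ)⁻¹)) ^ (1 / 2 : ℝ) := Real.sqrt_eq_rpow _
        _ = (avCount β n : ℝ) ^ ((n : ℝ)⁻¹ * (1 / 2)) := by
            rw [← Real.rpow_mul (Nat.cast_nonneg _)]
        _ ≤ (avICount β (2 * n) : ℝ) ^ ((n : ℝ)⁻¹ * (1 / 2)) :=
            Real.rpow_le_rpow (Nat.cast_nonneg _) hle (by positivity)
        _ = (avICount β (2 * n) : ℝ) ^ (((2 * n : ℕ) : ℝ)⁻¹) := by rw [hcast]
  exact analytic_step hu0 hv0 hvu hkey
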